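/- arXiv:1408.6039 — 10 statements merged into one kernel-verified Lean document; each statement's English description precedes it below -/
import Mathlib

section
/- Fix reals P ≥ 0 and 0 < N_1 ≤ N_3, and define g(α) = C((1−α)P/(αP+N_1)) − C((1−α)P/(αP+N_3)) for α ∈ [0,1]. Then g is nonincreasing on [0,1], g(0) = C(P/N_1) − C(P/N_3), and g(1) = 0. -/
/-- `C q = (1/2) · log(1+q)` (natural logarithm). -/
noncomputable def C (q : ℝ) : ℝ := (1 / 2) * Real.log (1 + q)

lemma C_rewrite (P N α : ℝ) (hN : 0 < α * P + N) :
    C ((1 - α) * P / (α * P + N)) = (1/2) * Real.log ((P + N) / (α * P + N)) := by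
  unfold C
  congr 1
  field_simp
  ring

/-- The rate-gap function `g(α) = C((1−α)P/(αP+N₁)) − C((1−α)P/(αP+N₃))` is
nonincreasing on `[0,1]`, with `g(0) = C(P/N₁) − C(P/N₃)` and `g(1) = 0`. -/
theorem rate_gap_antitone (P N₁ N₃ : ℝ) (hP : 0 ≤ P) (hN1 : 0 < N₁) (hN13 : N₁ ≤ N₃) :
    AntitoneOn
      (fun α : ℝ => C ((1 - α) * P / (α * P + N₁)) - C ((1 - α) * P / (α * P + N₃)))
      (Set.Icc 0 1) ∧
    C ((1 - (0:ℝ)) * P / ((0:ℝ) * P + N₁)) - C ((1 - (0:ℝ)) * P / ((0:ℝ) * P + N₃))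
      = C (P / N₁) - C (P / N₃) ∧
    C ((1 - (1:ℝ)) * P / ((1:ℝ) * P + N₁)) - C ((1 - (1:ℝ)) * P / ((1:ℝ) * P + N₃))
      = 0 := by
  have hN3 : 0 < N₃ := lt_of_lt_of_le hN1 hN13
  refine ⟨?_, ?_, ?_⟩
  · intro a ha b hb hab
    obtain ⟨ha0, ha1⟩ := ha
    obtain ⟨hb0, hb1⟩ := hb
    have h1a : 0 < a * P + N₁ := by positivity
    have h3a : 0 < a * P + N₃ := by positivity
    have h1b : 0 < b * P + N₁ := by positivity
    have h3b : 0 < b * P + N₃ := by positivity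
    simp only [C_rewrite P N₁ a h1a, C_rewrite P N₃ a h3a,
      C_rewrite P N₁ b h1b, C_rewrite P N₃ b h3b]
    have hPN1 : 0 < P + N₁ := by positivity
    have hPN3 : 0 < P + N₃ := by positivity
    rw [Real.log_div (ne_of_gt hPN1) (ne_of_gt h1b),
        Real.log_div (ne_of_gt hPN3) (ne_of_gt h3b),
        Real.log_div (ne_of_gt hPN1) (ne_of_gt h1a),
        Real.log_div (ne_of_gt hPN3) (ne_of_gt h3a)]
    have key : Real.log ((b * P + N₃) * (a * P + N₁)) ≤
        Real.log ((a * P + N₃) * (b * P + N₁)) := by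
      apply Real.log_le_log (by positivity)
      nlinarith [mul_nonneg (mul_nonneg (sub_nonneg.2 hab) hP) (sub_nonneg.2 hN13)]
    rw [Real.log_mul (ne_of_gt h3b) (ne_of_gt h1a),
        Real.log_mul (ne_of_gt h3a) (ne_of_gt h1b)] at key
    linarith
  · norm_num
  · norm_num [C]
end

section
/- For all reals P > 0, 0 < N_1 < N_3, and any R_1 with 0 < R_1 < C(P/N_1) − C(P/N_3), there exists a unique α* ∈ (0,1) such that R_1 = C((1−α*)P/(α*P+N_1)) − C((1−α*)P/(α*P+N_3)). -/
lemma C_key (P N α : ℝ) (hP : 0 < P) (hN : 0 < N) (hα : 0 ≤ α) :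
    C ((1 - α) * P / (α * P + N)) = (1 / 2) * (Real.log (P + N) - Real.log (α * P + N)) := by
  have hden : 0 < α * P + N := by positivity
  have h1 : 1 + (1 - α) * P / (α * P + N) = (P + N) / (α * P + N) := by
    field_simp; ring
  rw [C, h1, Real.log_div (show (0:ℝ) < P + N by positivity).ne' hden.ne']

/-- For `P > 0`, `0 < N₁ < N₃` and `0 < R₁ < C(P/N₁) − C(P/N₃)`, there is a unique
`α* ∈ (0,1)` with `R₁ = C((1−α*)P/(α*P+N₁)) − C((1−α*)P/(α*P+N₃))`. -/
theorem exists_unique_alpha_star (P N₁ N₃ R₁ : ℝ) (hP : 0 < P) (hN1 : 0 < N₁)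
    (hN13 : N₁ < N₃) (hR0 : 0 < R₁) (hR1 : R₁ < C (P / N₁) - C (P / N₃)) :
    ∃! α : ℝ, α ∈ Set.Ioo (0:ℝ) 1 ∧
      R₁ = C ((1 - α) * P / (α * P + N₁)) - C ((1 - α) * P / (α * P + N₃)) := by
  have hN3 : 0 < N₃ := hN1.trans hN13
  set f : ℝ → ℝ := fun α =>
    (1 / 2) * (Real.log (P + N₁) - Real.log (α * P + N₁)) -
    (1 / 2) * (Real.log (P + N₃) - Real.log (α * P + N₃)) with hf
  -- rewrite goal values via f
  have hCf : ∀ α : ℝ, 0 ≤ α →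
      C ((1 - α) * P / (α * P + N₁)) - C ((1 - α) * P / (α * P + N₃)) = f α := by
    intro α hα
    rw [C_key P N₁ α hP hN1 hα, C_key P N₃ α hP hN3 hα]
  -- f is strictly decreasing on [0,1]
  have hanti : StrictAntiOn f (Set.Icc (0:ℝ) 1) := by
    intro a ha b hb hab
    have ha0 : 0 ≤ a := ha.1
    have hb0 : 0 ≤ b := hb.1
    have h1 : (0:ℝ) < a * P + N₁ := by positivity
    have h3 : (0:ℝ) < a * P + N₃ := by positivity
    have h1' : (0:ℝ) < b * P + N₁ := by positivity
    have h3' : (0:ℝ) < b * P + N₃ := by positivity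
    have hlt : (b * P + N₃) / (b * P + N₁) < (a * P + N₃) / (a * P + N₁) := by
      rw [div_lt_div_iff₀ h1' h1]
      nlinarith [mul_pos (mul_pos hP (sub_pos.mpr hab)) (sub_pos.mpr hN13)]
    have := Real.log_lt_log (by positivity) hlt
    rw [Real.log_div h3'.ne' h1'.ne', Real.log_div h3.ne' h1.ne'] at this
    simp only [hf]
    linarith
  -- continuity of f on [0,1]
  have hlogcont : ∀ N : ℝ, 0 < N → ContinuousOn (fun α : ℝ => Real.log (α * P + N))
      (Set.Icc (0:ℝ) 1) := by
    intro N hN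
    apply ContinuousOn.log
    · exact ((continuous_id.mul continuous_const).add continuous_const).continuousOn
    · intro x hx
      have : 0 < x * P + N := by nlinarith [hx.1]
      exact this.ne'
  have hcont : ContinuousOn f (Set.Icc (0:ℝ) 1) := by
    apply ContinuousOn.sub
    · exact continuousOn_const.mul (continuousOn_const.sub (hlogcont N₁ hN1))
    · exact continuousOn_const.mul (continuousOn_const.sub (hlogcont N₃ hN3))
  -- endpoint values
  have hf1 : f 1 = 0 := by simp [hf]
  have hf0 : f 0 = C (P / N₁) - C (P / N₃) := by
    have e1 : (1:ℝ) + P / N₁ = (P + N₁) / N₁ := by field_simp; ring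
    have e3 : (1:ℝ) + P / N₃ = (P + N₃) / N₃ := by field_simp; ring
    simp only [hf, C, e1, e3, Real.log_div (by positivity : (0:ℝ) < P + N₁).ne' hN1.ne',
      Real.log_div (by positivity : (0:ℝ) < P + N₃).ne' hN3.ne']
    ring
  -- existence via IVT (decreasing)
  have hmem : R₁ ∈ Set.Ioo (f 1) (f 0) := by
    rw [hf1, hf0]; exact ⟨hR0, hR1⟩
  have hsub := intermediate_value_Ioo' (by norm_num : (0:ℝ) ≤ 1) hcont
  obtain ⟨α, hαmem, hαval⟩ := hsub hmem
  refine ⟨α, ⟨hαmem, ?_⟩, ?_⟩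
  · rw [hCf α hαmem.1.le, hαval]
  · rintro β ⟨hβmem, hβval⟩
    rw [hCf β hβmem.1.le] at hβval
    have hβI : β ∈ Set.Icc (0:ℝ) 1 := ⟨hβmem.1.le, hβmem.2.le⟩
    have hαI : α ∈ Set.Icc (0:ℝ) 1 := ⟨hαmem.1.le, hαmem.2.le⟩
    exact hanti.injOn hβI hαI (by rw [← hβval, hαval])
end

section
/- Let P > 0 and 0 < N_1 ≤ N_2 ≤ N_3 be reals, and let R_1, R_2, R_3 ≥ 0. Suppose there exists α ∈ [0,1] with R_1 ≤ C(P/N_1), R_2 ≤ C(αP/N_2), and R_3 ≤ C((1−α)P/(αP+N_3)), and there exists γ ∈ [0,1] with R_1 + R_3 ≤ C(γP/N_1), R_2 ≤ C((1−γ)P/(γP+N_2)), and R_3 ≤ C(γP/N_2). Then R_3 ≤ C(P/N_3), R_2 + R_3 ≤ C(P/N_2), and R_1 + R_2 + R_3 ≤ C(P/N_1). -/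
lemma C_mono {a b : ℝ} (ha : 0 ≤ a) (hab : a ≤ b) : C a ≤ C b := by
  unfold C
  have h1 : (0:ℝ) < 1 + a := by linarith
  have := Real.log_le_log h1 (by linarith : 1 + a ≤ 1 + b)
  linarith

lemma C_sum {P N γ : ℝ} (hP : 0 < P) (hN : 0 < N) (hγ0 : 0 ≤ γ) (hγ1 : γ ≤ 1) :
    C (γ * P / N) + C ((1 - γ) * P / (γ * P + N)) = C (P / N) := by
  have hγPN : 0 < γ * P + N := by nlinarith
  have h1 : (0:ℝ) < 1 + γ * P / N := by positivity
  have h2 : (0:ℝ) < 1 + (1 - γ) * P / (γ * P + N) := by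
    have : 0 ≤ (1 - γ) * P / (γ * P + N) :=
      div_nonneg (mul_nonneg (by linarith) hP.le) hγPN.le
    linarith
  have key : (1 + γ * P / N) * (1 + (1 - γ) * P / (γ * P + N)) = 1 + P / N := by
    field_simp
    ring
  unfold C
  rw [← mul_add, ← Real.log_mul (ne_of_gt h1) (ne_of_gt h2), key]

/-- The proposed outer bound for `G₁₄ ∪ G₂₁` is contained in the best previously
known outer bound. -/
theorem group4_outer_tighter (P N₁ N₂ N₃ R₁ R₂ R₃ : ℝ)
    (hP : 0 < P) (hN1 : 0 < N₁) (hN12 : N₁ ≤ N₂) (hN23 : N₂ ≤ N₃)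
    (hR1 : 0 ≤ R₁) (hR2 : 0 ≤ R₂) (hR3 : 0 ≤ R₃)
    (hα : ∃ α : ℝ, 0 ≤ α ∧ α ≤ 1 ∧
      R₁ ≤ C (P / N₁) ∧ R₂ ≤ C (α * P / N₂) ∧
      R₃ ≤ C ((1 - α) * P / (α * P + N₃)))
    (hγ : ∃ γ : ℝ, 0 ≤ γ ∧ γ ≤ 1 ∧
      R₁ + R₃ ≤ C (γ * P / N₁) ∧ R₂ ≤ C ((1 - γ) * P / (γ * P + N₂)) ∧
      R₃ ≤ C (γ * P / N₂)) :
    R₃ ≤ C (P / N₃) ∧ R₂ + R₃ ≤ C (P / N₂) ∧ R₁ + R₂ + R₃ ≤ C (P / N₁) := by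
  obtain ⟨α, hα0, hα1, hA1, hA2, hA3⟩ := hα
  obtain ⟨γ, hγ0, hγ1, hG1, hG2, hG3⟩ := hγ
  have hN2 : 0 < N₂ := lt_of_lt_of_le hN1 hN12
  have hN3 : 0 < N₃ := lt_of_lt_of_le hN2 hN23
  have hαPN : 0 < α * P + N₃ := by nlinarith
  have hγPN1 : 0 < γ * P + N₁ := by nlinarith
  refine ⟨?_, ?_, ?_⟩
  · refine le_trans hA3 (C_mono (div_nonneg (mul_nonneg (by linarith) hP.le) hαPN.le) ?_)
    rw [div_le_div_iff₀ hαPN hN3]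
    nlinarith [mul_nonneg (mul_nonneg hα0 hP.le) (by linarith : (0:ℝ) ≤ P + N₃)]
  · calc R₂ + R₃ ≤ C ((1 - γ) * P / (γ * P + N₂)) + C (γ * P / N₂) := by
          exact add_le_add hG2 hG3
      _ = C (P / N₂) := by rw [add_comm]; exact C_sum hP hN2 hγ0 hγ1
  · have hγPN2 : 0 < γ * P + N₂ := by nlinarith
    have h2' : C ((1 - γ) * P / (γ * P + N₂)) ≤ C ((1 - γ) * P / (γ * P + N₁)) := by
      apply C_mono (div_nonneg (mul_nonneg (by linarith) hP.le) hγPN2.le)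
      rw [div_le_div_iff₀ hγPN2 hγPN1]
      nlinarith [mul_nonneg (mul_nonneg (by linarith : (0:ℝ) ≤ 1 - γ) hP.le) (by linarith : (0:ℝ) ≤ N₂ - N₁)]
    calc R₁ + R₂ + R₃ = (R₁ + R₃) + R₂ := by ring
      _ ≤ C (γ * P / N₁) + C ((1 - γ) * P / (γ * P + N₁)) := by
          exact add_le_add hG1 (le_trans hG2 h2')
      _ = C (P / N₁) := C_sum hP hN1 hγ0 hγ1
end

section
/- Let P > 0 and 0 < N_1 ≤ N_2 ≤ N_3 be reals. Let γ* ∈ [0,1] and suppose R_1 = C(γ*P/N_1) − C(γ*P/N_3) and R_3 ≤ C(γ*P/N_3) with R_3 ≥ 0. If γ ∈ [0,1] satisfies R_1 + R_3 ≤ C(γP/N_1), then R_3 ≤ C(γP/N_3). -/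
lemma C_mono_s8 {x y : ℝ} (hx : 0 ≤ x) (hxy : x ≤ y) : C x ≤ C y := by
  unfold C
  have : Real.log (1 + x) ≤ Real.log (1 + y) :=
    Real.log_le_log (by linarith) (by linarith)
  linarith

/-- Below the threshold `R_thr3 = C(γ*P/N₃)`, any point of outer bound 2 also
satisfies (weakly) the extra inner-bound condition `R₃ ≤ C(γP/N₃)` with the same `γ`. -/
theorem group4_below_threshold (P N₁ N₂ N₃ R₁ R₃ γstar γ : ℝ)
    (hP : 0 < P) (hN1 : 0 < N₁) (hN12 : N₁ ≤ N₂) (hN23 : N₂ ≤ N₃)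
    (hγs0 : 0 ≤ γstar) (hγs1 : γstar ≤ 1)
    (hR1 : R₁ = C (γstar * P / N₁) - C (γstar * P / N₃))
    (hR3thr : R₃ ≤ C (γstar * P / N₃)) (hR3 : 0 ≤ R₃)
    (hγ0 : 0 ≤ γ) (hγ1 : γ ≤ 1) (hsum : R₁ + R₃ ≤ C (γ * P / N₁)) :
    R₃ ≤ C (γ * P / N₃) := by
  have hN3 : 0 < N₃ := lt_of_lt_of_le hN1 (le_trans hN12 hN23)
  rcases le_or_gt γstar γ with hle | hlt
  · -- monotonicity
    have : C (γstar * P / N₃) ≤ C (γ * P / N₃) := by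
      apply C_mono_s8 (by positivity)
      gcongr
    linarith
  · -- γ < γstar : key inequality
    have key : C (γ * P / N₁) + C (γstar * P / N₃) ≤
        C (γstar * P / N₁) + C (γ * P / N₃) := by
      unfold C
      have h1 : (0:ℝ) < 1 + γ * P / N₁ := by positivity
      have h2 : (0:ℝ) < 1 + γstar * P / N₃ := by positivity
      have h3 : (0:ℝ) < 1 + γstar * P / N₁ := by positivity
      have h4 : (0:ℝ) < 1 + γ * P / N₃ := by positivity
      have hprod : (1 + γ * P / N₁) * (1 + γstar * P / N₃) ≤
          (1 + γstar * P / N₁) * (1 + γ * P / N₃) := by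
        have e1 : 1 + γ * P / N₁ = (N₁ + γ * P) / N₁ := by field_simp
        have e2 : 1 + γstar * P / N₃ = (N₃ + γstar * P) / N₃ := by field_simp
        have e3 : 1 + γstar * P / N₁ = (N₁ + γstar * P) / N₁ := by field_simp
        have e4 : 1 + γ * P / N₃ = (N₃ + γ * P) / N₃ := by field_simp
        rw [e1, e2, e3, e4, div_mul_div_comm, div_mul_div_comm,
          div_le_div_iff₀ (by positivity) (by positivity)]
        nlinarith [mul_nonneg (mul_nonneg (mul_nonneg hP.le
          (by linarith : (0:ℝ) ≤ γstar - γ)) (by linarith : (0:ℝ) ≤ N₃ - N₁))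
          (mul_pos hN1 hN3).le]
      have := Real.log_le_log (by positivity) hprod
      rw [Real.log_mul h1.ne' h2.ne', Real.log_mul h3.ne' h4.ne'] at this
      linarith
    linarith [hsum, hR1.symm ▸ hsum, key]
end

section
/- Let P > 0 and 0 < N_1 ≤ N_3 be reals. Let α* ∈ [0,1] and suppose R_1 = C((1−α*)P/(α*P+N_1)) − C((1−α*)P/(α*P+N_3)). If α ∈ [0,1] and R_3 satisfies C((1−α*)P/(α*P+N_3)) ≤ R_3 ≤ C((1−α)P/(αP+N_3)), then R_1 + R_3 ≤ C((1−α)P/(αP+N_1)). -/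
lemma C_rw (P N a : ℝ) (hP : 0 < P) (hN : 0 < N) (ha : 0 ≤ a) :
    C ((1 - a) * P / (a * P + N)) = (1 / 2) * (Real.log (P + N) - Real.log (a * P + N)) := by
  have h : 0 < a * P + N := by positivity
  have h2 : (1 : ℝ) + (1 - a) * P / (a * P + N) = (P + N) / (a * P + N) := by
    field_simp; ring
  rw [C, h2, Real.log_div (by positivity) (ne_of_gt h)]

/-- Above the threshold `R'_thr3 = C((1−α*)P/(α*P+N₃))`, any point of outer bound 1
also satisfies (weakly) the extra inner-bound condition with the same `α`. -/
theorem group4_above_threshold (P N₁ N₃ R₁ R₃ αstar α : ℝ)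
    (hP : 0 < P) (hN1 : 0 < N₁) (hN13 : N₁ ≤ N₃)
    (hαs0 : 0 ≤ αstar) (hαs1 : αstar ≤ 1)
    (hR1 : R₁ = C ((1 - αstar) * P / (αstar * P + N₁))
              - C ((1 - αstar) * P / (αstar * P + N₃)))
    (hα0 : 0 ≤ α) (hα1 : α ≤ 1)
    (hR3lo : C ((1 - αstar) * P / (αstar * P + N₃)) ≤ R₃)
    (hR3hi : R₃ ≤ C ((1 - α) * P / (α * P + N₃))) :
    R₁ + R₃ ≤ C ((1 - α) * P / (α * P + N₁)) := by
  have hN3 : 0 < N₃ := lt_of_lt_of_le hN1 hN13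
  have h1 : 0 < αstar * P + N₁ := by positivity
  have h2 : 0 < αstar * P + N₃ := by positivity
  have h3 : 0 < α * P + N₁ := by positivity
  have h4 : 0 < α * P + N₃ := by positivity
  rw [C_rw P N₁ αstar hP hN1 hαs0] at hR1
  rw [C_rw P N₃ αstar hP hN3 hαs0] at hR1 hR3lo
  rw [C_rw P N₃ α hP hN3 hα0] at hR3hi
  rw [C_rw P N₁ α hP hN1 hα0]
  -- from hR3lo ≤ hR3hi: α ≤ αstar
  have hlog : Real.log (α * P + N₃) ≤ Real.log (αstar * P + N₃) := by linarith
  have hle : α * P + N₃ ≤ αstar * P + N₃ := by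
    by_contra hc
    push_neg at hc
    exact absurd (Real.log_lt_log h2 hc) (not_lt.mpr hlog)
  have hαα : α ≤ αstar := by nlinarith
  -- key product inequality
  have hprod : (α * P + N₁) * (αstar * P + N₃) ≤ (αstar * P + N₁) * (α * P + N₃) := by
    nlinarith [mul_nonneg (sub_nonneg.mpr hαα) (sub_nonneg.mpr hN13)]
  have hkey : Real.log ((α * P + N₁) * (αstar * P + N₃)) ≤
      Real.log ((αstar * P + N₁) * (α * P + N₃)) :=
    Real.log_le_log (by positivity) hprod
  rw [Real.log_mul (ne_of_gt h3) (ne_of_gt h2), Real.log_mul (ne_of_gt h1) (ne_of_gt h4)] at hkey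
  linarith
end

section
/- Let P > 0 and 0 < N_1 ≤ N_3 be reals. Suppose R_1 ≥ C(P/N_1) − C(P/N_3) and R_3 ≥ 0. If γ ∈ [0,1] satisfies R_1 + R_3 ≤ C(γP/N_1), then R_3 ≤ C(γP/N_3). -/
/-- In the regime `R₁ ≥ C(P/N₁) − C(P/N₃)`, the outer-bound-2 constraint
`R₁ + R₃ ≤ C(γP/N₁)` forces `R₃ ≤ C(γP/N₃)` with the same `γ`. -/
theorem group4_high_R1 (P N₁ N₃ R₁ R₃ γ : ℝ)
    (hP : 0 < P) (hN1 : 0 < N₁) (hN13 : N₁ ≤ N₃)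
    (hR1 : C (P / N₁) - C (P / N₃) ≤ R₁) (hR3 : 0 ≤ R₃)
    (hγ0 : 0 ≤ γ) (hγ1 : γ ≤ 1) (hsum : R₁ + R₃ ≤ C (γ * P / N₁)) :
    R₃ ≤ C (γ * P / N₃) := by
  have hN3 : 0 < N₃ := lt_of_lt_of_le hN1 hN13
  have h1 : (0:ℝ) < 1 + γ * P / N₁ := by positivity
  have h2 : (0:ℝ) < 1 + P / N₃ := by positivity
  have h3 : (0:ℝ) < 1 + P / N₁ := by positivity
  have h4 : (0:ℝ) < 1 + γ * P / N₃ := by positivity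
  have hd : (1 - γ) * P / N₃ ≤ (1 - γ) * P / N₁ :=
    div_le_div_of_nonneg_left (by nlinarith) hN1 hN13
  have e1 : (1 - γ) * P / N₃ = P / N₃ - γ * P / N₃ := by ring
  have e2 : (1 - γ) * P / N₁ = P / N₁ - γ * P / N₁ := by ring
  have hab : (γ * P / N₁) * (P / N₃) = (P / N₁) * (γ * P / N₃) := by
    field_simp
  have key : (1 + γ * P / N₁) * (1 + P / N₃) ≤ (1 + P / N₁) * (1 + γ * P / N₃) := by
    nlinarith [hd, hab]
  have hlog : Real.log (1 + γ * P / N₁) + Real.log (1 + P / N₃)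
      ≤ Real.log (1 + P / N₁) + Real.log (1 + γ * P / N₃) := by
    rw [← Real.log_mul h1.ne' h2.ne', ← Real.log_mul h3.ne' h4.ne']
    exact Real.log_le_log (by positivity) key
  simp only [C] at *
  linarith
end

section
/- Let P > 0 and 0 < N_1 ≤ N_2 ≤ N_3 be reals. Then the set A = {(R_2, R_3) ∈ ℝ² : R_2 ≥ 0, R_3 ≥ 0, and there exists α ∈ [0,1] with R_3 ≤ C((1−α)P/(αP+N_1)), R_2 ≤ C(αP/N_2), and R_3 ≤ C((1−α)P/(αP+N_3))} is equal to the set B = {(R_2, R_3) ∈ ℝ² : R_2 ≥ 0, R_3 ≥ 0, and there exists α ∈ [0,1] with R_2 ≤ C(αP/N_2) and R_3 ≤ C((1−α)P/(αP+N_3))}. -/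
lemma C_mono_s11 {q q' : ℝ} (hq : 0 ≤ q) (h : q ≤ q') : C q ≤ C q' := by
  unfold C
  have : 1 + q ≤ 1 + q' := by linarith
  have h1 : (0:ℝ) < 1 + q := by linarith
  nlinarith [Real.log_le_log h1 this]

/-- At `R₁ = 0`, the slice of inner bound 1 equals the slice of outer bound 1:
the constraint `R₃ ≤ C((1−α)P/(αP+N₁))` is redundant since `N₁ ≤ N₃`. -/
theorem group4_R1_zero_slices_eq (P N₁ N₂ N₃ : ℝ)
    (hP : 0 < P) (hN1 : 0 < N₁) (hN12 : N₁ ≤ N₂) (hN23 : N₂ ≤ N₃) :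
    {p : ℝ × ℝ | 0 ≤ p.1 ∧ 0 ≤ p.2 ∧ ∃ α : ℝ, 0 ≤ α ∧ α ≤ 1 ∧
        p.2 ≤ C ((1 - α) * P / (α * P + N₁)) ∧
        p.1 ≤ C (α * P / N₂) ∧
        p.2 ≤ C ((1 - α) * P / (α * P + N₃))} =
    {p : ℝ × ℝ | 0 ≤ p.1 ∧ 0 ≤ p.2 ∧ ∃ α : ℝ, 0 ≤ α ∧ α ≤ 1 ∧
        p.1 ≤ C (α * P / N₂) ∧
        p.2 ≤ C ((1 - α) * P / (α * P + N₃))} := by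
  ext p
  simp only [Set.mem_setOf_eq]
  constructor
  · rintro ⟨h1, h2, α, hα0, hα1, _, hc2, hc3⟩
    exact ⟨h1, h2, α, hα0, hα1, hc2, hc3⟩
  · rintro ⟨h1, h2, α, hα0, hα1, hc2, hc3⟩
    refine ⟨h1, h2, α, hα0, hα1, ?_, hc2, hc3⟩
    refine hc3.trans (C_mono_s11 ?_ ?_)
    · apply div_nonneg
      · nlinarith
      · nlinarith
    · apply div_le_div_of_nonneg_left
      · nlinarith
      · nlinarith
      · nlinarith
end

section
/- Let P > 0 and 0 < N_1 ≤ N_2 ≤ N_3 be reals, and let R_1, R_2, R_3 ≥ 0. Suppose there exist α_1, α_2, α_3 ≥ 0 with α_1 + α_2 + α_3 = 1 such that, with B_1 = C(α_1 P/N_1), B_2 = C(α_2 P/(α_1 P + N_2)), and B_3 = C(α_3 P/((α_1+α_2)P + N_2)), one has R_1 + R_2 + R_3 < B_1 + B_2 + B_3, R_2 + R_3 < B_2 + B_3, and R_3 < min{C(α_3 P/N_3), B_3}. Then, with α = α_1: R_1 + R_2 + R_3 < C((1−α)P/(αP+N_2)) + C(αP/N_1), R_2 < C((1−α)P/(αP+N_2)),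 R_2 + R_3 < C((1−α)P/(αP+N_2)) + C(αP/N_3), and R_3 < C(P/N_3). -/
/-- For the member `G₁₇ ∪ G₂₁` of group 7, every rate triple in the best previously
existing inner bound (with powers `α₁, α₂, α₃`) also satisfies the conditions of the
proposed inner bound `R'_in` with `α = α₁`. -/
theorem group7_inner_larger (P N₁ N₂ N₃ R₁ R₂ R₃ α₁ α₂ α₃ : ℝ)
    (hP : 0 < P) (hN1 : 0 < N₁) (hN12 : N₁ ≤ N₂) (hN23 : N₂ ≤ N₃)
    (hR1 : 0 ≤ R₁) (hR2 : 0 ≤ R₂) (hR3 : 0 ≤ R₃)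
    (hα1 : 0 ≤ α₁) (hα2 : 0 ≤ α₂) (hα3 : 0 ≤ α₃) (hsum : α₁ + α₂ + α₃ = 1)
    (hold1 : R₁ + R₂ + R₃ < C (α₁ * P / N₁) + C (α₂ * P / (α₁ * P + N₂)) +
        C (α₃ * P / ((α₁ + α₂) * P + N₂)))
    (hold2 : R₂ + R₃ < C (α₂ * P / (α₁ * P + N₂)) +
        C (α₃ * P / ((α₁ + α₂) * P + N₂)))
    (hold3 : R₃ < min (C (α₃ * P / N₃)) (C (α₃ * P / ((α₁ + α₂) * P + N₂)))) :
    R₁ + R₂ + R₃ < C ((1 - α₁) * P / (α₁ * P + N₂)) + C (α₁ * P / N₁) ∧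
    R₂ < C ((1 - α₁) * P / (α₁ * P + N₂)) ∧
    R₂ + R₃ < C ((1 - α₁) * P / (α₁ * P + N₂)) + C (α₁ * P / N₃) ∧
    R₃ < C (P / N₃) := by
  have hN2 : 0 < N₂ := lt_of_lt_of_le hN1 hN12
  have hN3 : 0 < N₃ := lt_of_lt_of_le hN2 hN23
  have ha : 0 < α₁ * P + N₂ := by positivity
  have hb : 0 < (α₁ + α₂) * P + N₂ := by
    have : 0 ≤ (α₁ + α₂) * P := by positivity
    linarith
  have hc : 0 < P + N₂ := by linarith
  have key : C (α₂ * P / (α₁ * P + N₂)) + C (α₃ * P / ((α₁ + α₂) * P + N₂))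
      = C ((1 - α₁) * P / (α₁ * P + N₂)) := by
    unfold C
    rw [show 1 + α₂ * P / (α₁ * P + N₂) = ((α₁ + α₂) * P + N₂) / (α₁ * P + N₂) by
      field_simp; ring]
    rw [show 1 + α₃ * P / ((α₁ + α₂) * P + N₂) = (P + N₂) / ((α₁ + α₂) * P + N₂) by
      field_simp; linear_combination P * hsum]
    rw [show 1 + (1 - α₁) * P / (α₁ * P + N₂) = (P + N₂) / (α₁ * P + N₂) by
      field_simp; ring]
    rw [Real.log_div hb.ne' ha.ne', Real.log_div hc.ne' hb.ne',
      Real.log_div hc.ne' ha.ne']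
    ring
  have hCN3 : 0 ≤ C (α₁ * P / N₃) := by
    unfold C
    have : (0:ℝ) ≤ α₁ * P / N₃ := by positivity
    have := Real.log_nonneg (by linarith : (1:ℝ) ≤ 1 + α₁ * P / N₃)
    linarith
  have hmono : C (α₃ * P / N₃) ≤ C (P / N₃) := by
    unfold C
    have h1 : α₃ ≤ 1 := by linarith
    have h2 : α₃ * P / N₃ ≤ P / N₃ := by
      gcongr
      nlinarith
    have h3 : (0:ℝ) ≤ α₃ * P / N₃ := by positivity
    have hlog : Real.log (1 + α₃ * P / N₃) ≤ Real.log (1 + P / N₃) := by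
      gcongr
    linarith
  refine ⟨?_, ?_, ?_, ?_⟩
  · rw [add_comm]; linarith [key]
  · linarith [key]
  · linarith [key]
  · exact lt_of_lt_of_le (lt_of_lt_of_le hold3 (min_le_left _ _)) hmono
end

section
/- Let P > 0 and 0 < N_1 < N_2 be reals. Then there exist reals R_1 > 0 and R_2 > 0 with R_1 + R_2 = C(P/N_1) such that for every α ∈ [0,1], it is not the case that both R_1 ≤ C(αP/N_1) and R_2 ≤ C((1−α)P/(αP+N_2)). -/
lemma C_lt_C {a b : ℝ} (ha : -1 < a) (hab : a < b) : C a < C b := by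
  unfold C
  have h := Real.log_lt_log (show (0:ℝ) < 1 + a by linarith) (show 1+a < 1+b by linarith)
  linarith

lemma C_le_C {a b : ℝ} (ha : -1 < a) (hab : a ≤ b) : C a ≤ C b := by
  rcases eq_or_lt_of_le hab with h | h
  · rw [h]
  · exact le_of_lt (C_lt_C ha h)

lemma C_le_arg {a b : ℝ} (hb : -1 < b) (h : C a ≤ C b) : a ≤ b := by
  by_contra hc
  exact absurd h (not_le.mpr (C_lt_C hb (lt_of_not_ge hc)))

lemma C_add {a b : ℝ} (ha : -1 < a) (hb : -1 < b) : C a + C b = C (a + b + a*b) := by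
  unfold C
  rw [show (1:ℝ) + (a + b + a*b) = (1+a)*(1+b) by ring,
    Real.log_mul (by nlinarith) (by linarith)]
  ring

/-- The curved outer-bound region is strictly contained in the polyhedral region
`{(R₁,R₂) : R₁ + R₂ ≤ C(P/N₁)}`: some point on the boundary of the polyhedron is
excluded by every choice of `α ∈ [0,1]`. -/
theorem group7_outer_strictly_tighter (P N₁ N₂ : ℝ)
    (hP : 0 < P) (hN1 : 0 < N₁) (hN12 : N₁ < N₂) :
    ∃ R₁ R₂ : ℝ, 0 < R₁ ∧ 0 < R₂ ∧ R₁ + R₂ = C (P / N₁) ∧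
      ∀ α : ℝ, 0 ≤ α → α ≤ 1 →
        ¬ (R₁ ≤ C (α * P / N₁) ∧ R₂ ≤ C ((1 - α) * P / (α * P + N₂))) := by
  set x := P / 2 with hx
  have hx0 : 0 < x := by positivity
  have hxN1 : 0 < x / N₁ := by positivity
  have hN2 : 0 < N₂ := lt_trans hN1 hN12
  have hxP : x < P := by rw [hx]; linarith
  have hy1 : 0 < x / (x + N₁) := by positivity
  have hy2 : 0 < x / (x + N₂) := by positivity
  have hC0 : C 0 = 0 := by simp [C]
  have hid : C (x / N₁) + C (x / (x + N₁)) = C (P / N₁) := by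
    rw [C_add (by linarith) (by linarith)]
    congr 1
    field_simp
    ring
  refine ⟨C (x / N₁), C (P / N₁) - C (x / N₁), ?_, ?_, by ring, ?_⟩
  · calc (0:ℝ) = C 0 := hC0.symm
      _ < C (x / N₁) := C_lt_C (by norm_num) hxN1
  · have : C (x / N₁) < C (P / N₁) := C_lt_C (by linarith) (by gcongr)
    linarith
  · rintro α hα0 hα1 ⟨h1, h2⟩
    have h0 : (0:ℝ) ≤ α * P / N₁ := by positivity
    have hxle : x / N₁ ≤ α * P / N₁ := C_le_arg (by linarith) h1
    have hxαP : x ≤ α * P := by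
      have := (div_le_div_iff_of_pos_right hN1).mp hxle
      linarith
    have harg : (1 - α) * P / (α * P + N₂) ≤ x / (x + N₂) := by
      apply div_le_div₀ (le_of_lt hx0) (by nlinarith) (by positivity) (by linarith)
    have hnn : (0:ℝ) ≤ (1 - α) * P := by nlinarith
    have h3 : C ((1 - α) * P / (α * P + N₂)) ≤ C (x / (x + N₂)) := by
      apply C_le_C _ harg
      have : (0:ℝ) ≤ (1 - α) * P / (α * P + N₂) := by positivity
      linarith
    have h4 : C (x / (x + N₂)) < C (x / (x + N₁)) := by
      apply C_lt_C (by linarith)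
      apply div_lt_div_of_pos_left hx0 (by linarith) (by linarith)
    linarith
end

section
/- Let P > 0 and N_1, N_2, N_3 > 0 be reals. Let W = {(R_1,R_2,R_3) ∈ ℝ³ : R_1,R_2,R_3 ≥ 0 and ∃α ∈ [0,1] with R_1 ≤ C(αP/N_1), R_2 ≤ C((1−α)P/(αP+N_2)), R_3 ≤ C(P/N_3)} and S = {(R_1,R_2,R_3) ∈ ℝ³ : R_1,R_2,R_3 ≥ 0 and ∃α ∈ [0,1] with R_1 < C(αP/N_1), R_2 < C((1−α)P/(αP+N_2)), R_3 < C(P/N_3)}. Then W equals the closure of S in ℝ³. -/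
lemma C_nonneg {q : ℝ} (hq : 0 ≤ q) : 0 ≤ C q :=
  mul_nonneg (by norm_num) (Real.log_nonneg (by linarith))

lemma C_pos {q : ℝ} (hq : 0 < q) : 0 < C q :=
  mul_pos (by norm_num) (Real.log_pos (by linarith))

lemma continuousAt_C {q : ℝ} (hq : 0 ≤ q) : ContinuousAt C q := by
  have h1 : ContinuousAt (fun q : ℝ => 1 + q) q := by fun_prop
  have h2 : ContinuousAt Real.log (1 + q) := Real.continuousAt_log (by linarith)
  exact continuousAt_const.mul (h2.comp h1)

lemma exists_t {r b : ℝ} (h0 : 0 ≤ r) (hb : 0 ≤ b) (h : r ≤ b) :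
    ∃ t ∈ Set.Icc (0:ℝ) 1, t * b = r := by
  rcases eq_or_lt_of_le hb with hb0 | hb0
  · exact ⟨0, ⟨le_refl _, zero_le_one⟩, by nlinarith⟩
  · exact ⟨r / b, ⟨div_nonneg h0 hb0.le, (div_le_one hb0).2 h⟩,
      div_mul_cancel₀ _ (ne_of_gt hb0)⟩

lemma beta_aux {α u : ℝ} (hα0 : 0 ≤ α) (hα1 : α ≤ 1) (hu0 : 0 < u) (hu : u ≤ 1/2) :
    0 < α + u * (1/2 - α) ∧ α + u * (1/2 - α) < 1 := by constructor <;> nlinarith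

lemma shrink_aux {m F u : ℝ} (hmF : m ≤ F) (hF : 0 < F) (hu0 : 0 < u) (hu1 : u < 1) :
    (1 - u) * m < F := by nlinarith

lemma isClosed_W (P N₁ N₂ N₃ : ℝ)
    (hP : 0 < P) (hN1 : 0 < N₁) (hN2 : 0 < N₂) (hN3 : 0 < N₃) :
    IsClosed {r : ℝ × ℝ × ℝ | 0 ≤ r.1 ∧ 0 ≤ r.2.1 ∧ 0 ≤ r.2.2 ∧ ∃ α : ℝ, 0 ≤ α ∧ α ≤ 1 ∧
        r.1 ≤ C (α * P / N₁) ∧ r.2.1 ≤ C ((1 - α) * P / (α * P + N₂)) ∧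
        r.2.2 ≤ C (P / N₃)} := by
  have key : {r : ℝ × ℝ × ℝ | 0 ≤ r.1 ∧ 0 ≤ r.2.1 ∧ 0 ≤ r.2.2 ∧ ∃ α : ℝ, 0 ≤ α ∧ α ≤ 1 ∧
        r.1 ≤ C (α * P / N₁) ∧ r.2.1 ≤ C ((1 - α) * P / (α * P + N₂)) ∧
        r.2.2 ≤ C (P / N₃)} =
      (fun p : ℝ × ℝ × ℝ × ℝ =>
        (p.2.1 * C (p.1 * P / N₁), p.2.2.1 * C ((1 - p.1) * P / (p.1 * P + N₂)),
         p.2.2.2 * C (P / N₃))) ''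
      (Set.Icc 0 1 ×ˢ Set.Icc 0 1 ×ˢ Set.Icc 0 1 ×ˢ Set.Icc 0 1) := by
    ext r
    simp only [Set.mem_setOf_eq, Set.mem_image, Set.mem_prod, Set.mem_Icc]
    constructor
    · rintro ⟨h1, h2, h3, α, hα0, hα1, hr1, hr2, hr3⟩
      have hf0 : 0 ≤ C (α * P / N₁) :=
        C_nonneg (div_nonneg (mul_nonneg hα0 hP.le) hN1.le)
      have hg0 : 0 ≤ C ((1 - α) * P / (α * P + N₂)) :=
        C_nonneg (div_nonneg (mul_nonneg (by linarith) hP.le)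
          (by positivity : (0:ℝ) < α * P + N₂).le)
      have hh0 : 0 ≤ C (P / N₃) := C_nonneg (div_nonneg hP.le hN3.le)
      obtain ⟨t₁, ht₁, he₁⟩ := exists_t h1 hf0 hr1
      obtain ⟨t₂, ht₂, he₂⟩ := exists_t h2 hg0 hr2
      obtain ⟨t₃, ht₃, he₃⟩ := exists_t h3 hh0 hr3
      refine ⟨(α, t₁, t₂, t₃), ⟨⟨hα0, hα1⟩, ⟨ht₁.1, ht₁.2⟩, ⟨ht₂.1, ht₂.2⟩, ⟨ht₃.1, ht₃.2⟩⟩, ?_⟩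
      simp only []
      rw [he₁, he₂, he₃]
    · rintro ⟨⟨α, t₁, t₂, t₃⟩, ⟨⟨hα0, hα1⟩, ⟨ht10, ht11⟩, ⟨ht20, ht21⟩, ⟨ht30, ht31⟩⟩, rfl⟩
      have hf0 : 0 ≤ C (α * P / N₁) :=
        C_nonneg (div_nonneg (mul_nonneg hα0 hP.le) hN1.le)
      have hg0 : 0 ≤ C ((1 - α) * P / (α * P + N₂)) :=
        C_nonneg (div_nonneg (mul_nonneg (by linarith) hP.le)
          (by positivity : (0:ℝ) < α * P + N₂).le)
      have hh0 : 0 ≤ C (P / N₃) := C_nonneg (div_nonneg hP.le hN3.le)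
      exact ⟨mul_nonneg ht10 hf0, mul_nonneg ht20 hg0, mul_nonneg ht30 hh0,
        α, hα0, hα1, by nlinarith, by nlinarith, by nlinarith⟩
  rw [key]
  have hK : IsCompact ((Set.Icc (0:ℝ) 1) ×ˢ (Set.Icc (0:ℝ) 1) ×ˢ (Set.Icc (0:ℝ) 1) ×ˢ (Set.Icc (0:ℝ) 1)) :=
    (isCompact_Icc.prod (isCompact_Icc.prod (isCompact_Icc.prod isCompact_Icc)))
  refine (hK.image_of_continuousOn ?_).isClosed
  intro p hp
  simp only [Set.mem_prod, Set.mem_Icc] at hp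
  obtain ⟨⟨hα0, hα1⟩, _, _, _⟩ := hp
  apply ContinuousAt.continuousWithinAt
  have c1 : ContinuousAt (fun p : ℝ × ℝ × ℝ × ℝ => C (p.1 * P / N₁)) p := by
    have harg : ContinuousAt (fun p : ℝ × ℝ × ℝ × ℝ => p.1 * P / N₁) p := by fun_prop
    show ContinuousAt (C ∘ fun p : ℝ × ℝ × ℝ × ℝ => p.1 * P / N₁) p
    exact ContinuousAt.comp (g := C) (f := fun p : ℝ × ℝ × ℝ × ℝ => p.1 * P / N₁) (x := p)
      (continuousAt_C (div_nonneg (mul_nonneg hα0 hP.le) hN1.le)) harg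
  have c2 : ContinuousAt (fun p : ℝ × ℝ × ℝ × ℝ => C ((1 - p.1) * P / (p.1 * P + N₂))) p := by
    have harg : ContinuousAt (fun p : ℝ × ℝ × ℝ × ℝ => (1 - p.1) * P / (p.1 * P + N₂)) p := by
      apply ContinuousAt.div (by fun_prop) (by fun_prop)
      positivity
    show ContinuousAt (C ∘ fun p : ℝ × ℝ × ℝ × ℝ => (1 - p.1) * P / (p.1 * P + N₂)) p
    exact ContinuousAt.comp (g := C)
      (f := fun p : ℝ × ℝ × ℝ × ℝ => (1 - p.1) * P / (p.1 * P + N₂)) (x := p)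
      (continuousAt_C (div_nonneg (mul_nonneg (by linarith : (0:ℝ) ≤ 1 - p.1) hP.le)
        (by positivity : (0:ℝ) < p.1 * P + N₂).le)) harg
  exact ((continuousAt_snd.fst.mul c1).prodMk
    ((continuousAt_snd.snd.fst.mul c2).prodMk
      (continuousAt_snd.snd.snd.mul continuousAt_const)))

/-- For the members `G₁₇ ∪ G₂₇` and `G₁₇ ∪ G₂₈` of group 7, the proposed outer bound
`W` equals the closure of the proposed inner bound `S`, establishing the capacity. -/
theorem group7_capacity_27_28 (P N₁ N₂ N₃ : ℝ)
    (hP : 0 < P) (hN1 : 0 < N₁) (hN2 : 0 < N₂) (hN3 : 0 < N₃) :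
    {r : ℝ × ℝ × ℝ | 0 ≤ r.1 ∧ 0 ≤ r.2.1 ∧ 0 ≤ r.2.2 ∧ ∃ α : ℝ, 0 ≤ α ∧ α ≤ 1 ∧
        r.1 ≤ C (α * P / N₁) ∧ r.2.1 ≤ C ((1 - α) * P / (α * P + N₂)) ∧
        r.2.2 ≤ C (P / N₃)} =
    closure {r : ℝ × ℝ × ℝ | 0 ≤ r.1 ∧ 0 ≤ r.2.1 ∧ 0 ≤ r.2.2 ∧
        ∃ α : ℝ, 0 ≤ α ∧ α ≤ 1 ∧
        r.1 < C (α * P / N₁) ∧ r.2.1 < C ((1 - α) * P / (α * P + N₂)) ∧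
        r.2.2 < C (P / N₃)} := by
  apply Set.Subset.antisymm
  · -- W ⊆ closure S
    rintro ⟨r1, r2, r3⟩ ⟨h1, h2, h3, α, hα0, hα1, hr1, hr2, hr3⟩
    simp only [Set.mem_setOf_eq] at *
    have hh : 0 < C (P / N₃) := C_pos (div_pos hP hN3)
    set t : ℕ → ℝ := fun n => 1 / ((n : ℝ) + 2) with htdef
    set β : ℕ → ℝ := fun n => α + t n * (1 / 2 - α) with hβdef
    have ht_pos : ∀ n, 0 < t n := fun n => by positivity
    have ht_le : ∀ n, t n ≤ 1 / 2 := by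
      intro n
      rw [htdef]
      rw [div_le_div_iff₀ (by positivity) (by norm_num)]
      have : (0:ℝ) ≤ (n:ℝ) := Nat.cast_nonneg n
      linarith
    have hβ_pos : ∀ n, 0 < β n := fun n => (beta_aux hα0 hα1 (ht_pos n) (ht_le n)).1
    have hβ_lt : ∀ n, β n < 1 := fun n => (beta_aux hα0 hα1 (ht_pos n) (ht_le n)).2
    set x : ℕ → ℝ × ℝ × ℝ := fun n =>
      ((1 - t n) * min r1 (C (β n * P / N₁)),
       (1 - t n) * min r2 (C ((1 - β n) * P / (β n * P + N₂))),
       (1 - t n) * r3) with hxdef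
    -- tendsto facts
    have htop : Filter.Tendsto (fun n : ℕ => (n : ℝ) + 2) Filter.atTop Filter.atTop :=
      Filter.tendsto_atTop_add_const_right _ 2 tendsto_natCast_atTop_atTop
    have ht0 : Filter.Tendsto t Filter.atTop (nhds 0) := by
      simpa [htdef, one_div, Pi.inv_def] using htop.inv_tendsto_atTop
    have hβt : Filter.Tendsto β Filter.atTop (nhds α) := by
      rw [hβdef]
      have := Filter.Tendsto.add (tendsto_const_nhds (x := α))
        (ht0.mul (tendsto_const_nhds (x := (1/2 - α))))
      simpa using this
    have h1mt : Filter.Tendsto (fun n => 1 - t n) Filter.atTop (nhds 1) := by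
      have := Filter.Tendsto.sub (tendsto_const_nhds (x := (1:ℝ))) ht0
      simpa using this
    have hftend : Filter.Tendsto (fun n => C (β n * P / N₁)) Filter.atTop
        (nhds (C (α * P / N₁))) := by
      have hc : ContinuousAt (fun a : ℝ => C (a * P / N₁)) α := by
        have harg : ContinuousAt (fun a : ℝ => a * P / N₁) α := by fun_prop
        exact ContinuousAt.comp (g := C) (f := fun a : ℝ => a * P / N₁) (x := α)
          (continuousAt_C (div_nonneg (mul_nonneg hα0 hP.le) hN1.le)) harg
      exact hc.tendsto.comp hβt
    have hgtend : Filter.Tendsto (fun n => C ((1 - β n) * P / (β n * P + N₂)))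
        Filter.atTop (nhds (C ((1 - α) * P / (α * P + N₂)))) := by
      have hc : ContinuousAt (fun a : ℝ => C ((1 - a) * P / (a * P + N₂))) α := by
        have harg : ContinuousAt (fun a : ℝ => (1 - a) * P / (a * P + N₂)) α := by
          apply ContinuousAt.div (by fun_prop) (by fun_prop)
          positivity
        exact ContinuousAt.comp (g := C) (f := fun a : ℝ => (1 - a) * P / (a * P + N₂)) (x := α)
          (continuousAt_C (div_nonneg (mul_nonneg (by linarith) hP.le)
            (by positivity : (0:ℝ) < α * P + N₂).le)) harg
      exact hc.tendsto.comp hβt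
    have hx1 : Filter.Tendsto (fun n => (x n).1) Filter.atTop (nhds r1) := by
      have := h1mt.mul ((tendsto_const_nhds (x := r1)).min hftend)
      simpa [hxdef, min_eq_left hr1] using this
    have hx2 : Filter.Tendsto (fun n => (x n).2.1) Filter.atTop (nhds r2) := by
      have := h1mt.mul ((tendsto_const_nhds (x := r2)).min hgtend)
      simpa [hxdef, min_eq_left hr2] using this
    have hx3 : Filter.Tendsto (fun n => (x n).2.2) Filter.atTop (nhds r3) := by
      have := h1mt.mul (tendsto_const_nhds (x := r3))
      simpa [hxdef] using this
    have hxt : Filter.Tendsto x Filter.atTop (nhds (r1, r2, r3)) :=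
      hx1.prodMk_nhds (hx2.prodMk_nhds hx3)
    refine mem_closure_of_tendsto hxt (Filter.Eventually.of_forall fun n => ?_)
    have hf_pos : 0 < C (β n * P / N₁) :=
      C_pos (div_pos (mul_pos (hβ_pos n) hP) hN1)
    have hg_pos : 0 < C ((1 - β n) * P / (β n * P + N₂)) :=
      C_pos (div_pos (mul_pos (by linarith [hβ_lt n]) hP)
        (by nlinarith [mul_pos (hβ_pos n) hP] : (0:ℝ) < β n * P + N₂))
    have htp := ht_pos n; have htl := ht_le n
    have hm1 : min r1 (C (β n * P / N₁)) ≤ C (β n * P / N₁) := min_le_right _ _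
    have hm2 : min r2 (C ((1 - β n) * P / (β n * P + N₂))) ≤ _ := min_le_right r2 _
    refine ⟨mul_nonneg (by linarith) (le_min h1 hf_pos.le),
      mul_nonneg (by linarith) (le_min h2 hg_pos.le),
      mul_nonneg (by linarith) h3,
      β n, (hβ_pos n).le, (hβ_lt n).le, ?_, ?_, ?_⟩
    · exact shrink_aux hm1 hf_pos htp (by linarith)
    · exact shrink_aux hm2 hg_pos htp (by linarith)
    · exact shrink_aux hr3 hh htp (by linarith)
  · -- closure S ⊆ W
    refine closure_minimal ?_ (isClosed_W P N₁ N₂ N₃ hP hN1 hN2 hN3)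
    rintro r ⟨h1, h2, h3, α, hα0, hα1, hr1, hr2, hr3⟩
    exact ⟨h1, h2, h3, α, hα0, hα1, hr1.le, hr2.le, hr3.le⟩
end
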